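/- Let $p$ be prime and $a,b,c \in \mathbb{N}$ with $c \le a+b$. Then $\mu(p^c) = \sum \frac{\mu(p^y)\,\mu(p^{x-\min\{b,x\}})\,\phi(p^x)}{\phi(p^{x-\min\{b,x\}})}$, where the sum is over pairs $(x,y)$ with $0 \le x \le a$, $0 \le y \le b$, and $\max\{x,y\} = c$. -/

import Mathlib

section Helpers
open ArithmeticFunction Finset

lemma mu_pp (p : ℕ) (hp : p.Prime) (k : ℕ) :
    (moebius (p ^ k) : ℚ) = if k = 0 then 1 else if k = 1 then -1 else 0 := by
  rcases Nat.eq_zero_or_pos k with h | h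
  · simp [h]
  · rw [moebius_apply_prime_pow hp h.ne']
    rcases eq_or_ne k 1 with h1 | h1 <;> simp [h1, h.ne']

lemma sum_mu_pp (p : ℕ) (hp : p.Prime) (n : ℕ) :
    ∑ y ∈ range (n + 1), (moebius (p ^ y) : ℚ) = if n = 0 then 1 else 0 := by
  induction n with
  | zero => simp
  | succ n ih =>
    rw [Finset.sum_range_succ, ih, mu_pp p hp]
    rcases Nat.eq_zero_or_pos n with h | h
    · simp [h]
    · simp [h.ne']


end Helpers

open ArithmeticFunction in
/-- For a prime `p` and `a, b, c ∈ ℕ` with `c ≤ a + b`,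
`μ(p^c) = ∑ μ(p^y) μ(p^(x - min b x)) φ(p^x) / φ(p^(x - min b x))`,
summing over `0 ≤ x ≤ a`, `0 ≤ y ≤ b` with `max x y = c`. -/
theorem stmt10 (p : ℕ) (hp : p.Prime) (a b c : ℕ) (hc : c ≤ a + b) :
    (moebius (p ^ c) : ℚ) =
      ∑ x ∈ Finset.range (a + 1), ∑ y ∈ Finset.range (b + 1),
        if max x y = c then
          (moebius (p ^ y) : ℚ) * (moebius (p ^ (x - min b x)) : ℚ)
            * (Nat.totient (p ^ x) : ℚ) / (Nat.totient (p ^ (x - min b x)) : ℚ)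
        else 0 := by
  classical
  have hφ : ∀ k : ℕ, (Nat.totient (p ^ k) : ℚ) ≠ 0 := fun k => by
    exact_mod_cast (Nat.totient_pos.mpr (pow_pos hp.pos k)).ne'
  set f : ℕ → ℚ := fun x =>
    (moebius (p ^ (x - min b x)) : ℚ) * (Nat.totient (p ^ x) : ℚ)
      / (Nat.totient (p ^ (x - min b x)) : ℚ) with hf
  have hf0 : f 0 = 1 := by
    simp [hf]
  have inner : ∀ x, (∑ y ∈ Finset.range (b + 1),
      if max x y = c then (moebius (p ^ y) : ℚ) * (moebius (p ^ (x - min b x)) : ℚ)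
        * (Nat.totient (p ^ x) : ℚ) / (Nat.totient (p ^ (x - min b x)) : ℚ) else 0)
      = if c < x then 0 else if x = c then (if min b c = 0 then f x else 0)
        else (if c ≤ b then (moebius (p ^ c) : ℚ) * f x else 0) := by
    intro x
    have hterm : ∀ y : ℕ,
        (moebius (p ^ y) : ℚ) * (moebius (p ^ (x - min b x)) : ℚ)
          * (Nat.totient (p ^ x) : ℚ) / (Nat.totient (p ^ (x - min b x)) : ℚ)
        = (moebius (p ^ y) : ℚ) * f x := fun y => by
      simp only [hf]; ring
    simp only [hterm]
    rcases lt_trichotomy c x with h | h | h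
    · rw [if_pos h]
      apply Finset.sum_eq_zero
      intro y _
      rw [if_neg]
      have := le_max_left x y
      omega
    · -- x = c
      subst h
      rw [if_neg (lt_irrefl c), if_pos rfl]
      have hcond : ∀ y : ℕ, (max c y = c) ↔ y ≤ c := fun y => max_eq_left_iff
      calc (∑ y ∈ Finset.range (b + 1),
            if max c y = c then (moebius (p ^ y) : ℚ) * f c else 0)
          = ∑ y ∈ Finset.range (min b c + 1), (moebius (p ^ y) : ℚ) * f c := by
            rw [← Finset.sum_filter]
            apply Finset.sum_congr
            · ext y
              simp only [Finset.mem_filter, Finset.mem_range, hcond]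
              omega
            · intros; rfl
        _ = (∑ y ∈ Finset.range (min b c + 1), (moebius (p ^ y) : ℚ)) * f c := by
            rw [Finset.sum_mul]
        _ = (if min b c = 0 then 1 else 0) * f c := by rw [sum_mu_pp p hp]
        _ = if min b c = 0 then f c else 0 := by
            rcases eq_or_ne (min b c) 0 with h | h <;> simp [h]
    · -- x < c
      rw [if_neg (by omega), if_neg (by omega)]
      have hcond : ∀ y : ℕ, (max x y = c) ↔ y = c := fun y => by
        constructor
        · intro hy
          have := le_max_right x y
          have := max_le_iff.mp hy.le
          omega
        · intro hy; subst hy; omega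
      calc (∑ y ∈ Finset.range (b + 1),
            if max x y = c then (moebius (p ^ y) : ℚ) * f x else 0)
          = ∑ y ∈ Finset.range (b + 1),
              if y = c then (moebius (p ^ y) : ℚ) * f x else 0 := by
            apply Finset.sum_congr rfl
            intro y _
            simp only [hcond]
        _ = if c ∈ Finset.range (b + 1) then (moebius (p ^ c) : ℚ) * f x else 0 :=
            Finset.sum_ite_eq' _ _ _
        _ = if c ≤ b then (moebius (p ^ c) : ℚ) * f x else 0 := by
            simp only [Finset.mem_range]
            congr 1
            simp only [eq_iff_iff]
            omega
  simp only [inner]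
  rcases Nat.eq_zero_or_pos c with hc0 | hc1
  · subst hc0
    have : ∀ x ∈ Finset.range (a + 1),
        (if 0 < x then (0:ℚ) else if x = 0 then (if min b 0 = 0 then f x else 0)
          else (if 0 ≤ b then (moebius (p ^ 0) : ℚ) * f x else 0))
        = if x = 0 then 1 else 0 := by
      intro x _
      rcases Nat.eq_zero_or_pos x with h | h
      · subst h; simp [hf0]
      · simp [h, h.ne']
    rw [Finset.sum_congr rfl this, Finset.sum_ite_eq' _ 0 (fun _ => (1:ℚ))]
    simp
  · rcases Nat.eq_zero_or_pos b with hb0 | hb1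
    · subst hb0
      have hca : c ≤ a := by omega
      have : ∀ x ∈ Finset.range (a + 1),
          (if c < x then (0:ℚ) else if x = c then (if min 0 c = 0 then f x else 0)
            else (if c ≤ 0 then (moebius (p ^ c) : ℚ) * f x else 0))
          = if x = c then f c else 0 := by
        intro x _
        rcases lt_trichotomy c x with h | h | h
        · rw [if_pos h, if_neg (by omega)]
        · simp [h]
        · rw [if_neg (by omega), if_neg (by omega), if_neg (by omega), if_neg (by omega)]
      rw [Finset.sum_congr rfl this, Finset.sum_ite_eq' _ c (fun _ => f c),
        if_pos (Finset.mem_range.mpr (by omega))]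
      simp only [hf, Nat.zero_min, Nat.sub_zero]
      rw [mul_div_assoc, div_self (hφ c), mul_one]
    · -- b ≥ 1
      have hmin : min b c ≠ 0 := by omega
      rcases le_or_gt c b with hcb | hcb
      · rcases eq_or_ne c 1 with hc1' | hc1'
        · subst hc1'
          have : ∀ x ∈ Finset.range (a + 1),
              (if 1 < x then (0:ℚ) else if x = 1 then (if min b 1 = 0 then f x else 0)
                else (if 1 ≤ b then (moebius (p ^ 1) : ℚ) * f x else 0))
              = if x = 0 then (moebius (p ^ 1) : ℚ) else 0 := by
            intro x _
            rcases lt_trichotomy 1 x with h | h | h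
            · rw [if_pos h, if_neg (by omega)]
            · rw [if_neg (by omega), if_pos h.symm, if_neg hmin, if_neg (by omega)]
            · have hx0 : x = 0 := by omega
              subst hx0
              rw [if_neg (by omega), if_neg (by omega), if_pos hcb, if_pos rfl, hf0, mul_one]
          rw [Finset.sum_congr rfl this, Finset.sum_ite_eq' _ 0 (fun _ => (moebius (p^1) : ℚ)),
            if_pos (Finset.mem_range.mpr (by omega))]
        · -- c ≥ 2
          have hmu : (moebius (p ^ c) : ℚ) = 0 := by
            rw [mu_pp p hp]; simp [hc1.ne', hc1']
          rw [hmu]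
          symm
          apply Finset.sum_eq_zero
          intro x _
          rcases lt_trichotomy c x with h | h | h
          · rw [if_pos h]
          · rw [if_neg (by omega), if_pos h.symm, if_neg hmin]
          · rw [if_neg (by omega), if_neg (by omega), if_pos hcb, zero_mul]
      · -- b < c, so c ≥ 2
        have hmu : (moebius (p ^ c) : ℚ) = 0 := by
          rw [mu_pp p hp]; simp [hc1.ne']; omega
        rw [hmu]
        symm
        apply Finset.sum_eq_zero
        intro x _
        rcases lt_trichotomy c x with h | h | h
        · rw [if_pos h]
        · rw [if_neg (by omega), if_pos h.symm, if_neg hmin]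
        · rw [if_neg (by omega), if_neg (by omega), if_neg (by omega)]
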